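/- Let μ be a reduced p×q interval matrix with 0 ≤ m_{i,j} ≤ M_{i,j} for all i,j. Then there exists A ∈ μ with rank(A) = 1 if and only if there exist positive real numbers c₁ = 1, c₂, …, c_q such that m_{i,t}·c_k ≤ M_{i,k}·c_t for every i ∈ {1,…,p} and every t, k ∈ {1,…,q}. -/

import Mathlib

open Module Matrix

/-- A nonzero "outer product" matrix has rank one. -/
lemma rank_of_outer {p q : ℕ} (u : Fin p → ℝ) (v : Fin q → ℝ)
    (hu : u ≠ 0) (hv : v ≠ 0) :
    (Matrix.of fun i j => u i * v j : Matrix (Fin p) (Fin q) ℝ).rank = 1 := by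
  set B : Matrix (Fin p) (Fin q) ℝ := Matrix.of fun i j => u i * v j with hB
  rw [Matrix.rank_eq_finrank_span_cols]
  have hcol : ∀ j, Bᵀ j = v j • u := by
    intro j; funext i; simp [hB, Matrix.transpose_apply, mul_comm, smul_eq_mul]
  have hspan : Submodule.span ℝ (Set.range Bᵀ) = Submodule.span ℝ {u} := by
    apply le_antisymm
    · rw [Submodule.span_le]
      rintro _ ⟨j, rfl⟩
      rw [hcol]
      exact Submodule.smul_mem _ _ (Submodule.mem_span_singleton_self u)
    · rw [Submodule.span_le, Set.singleton_subset_iff]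
      obtain ⟨j, hj⟩ : ∃ j, v j ≠ 0 := by
        by_contra h; push_neg at h; exact hv (funext h)
      have : u = (v j)⁻¹ • (Bᵀ j) := by
        rw [hcol, smul_smul, inv_mul_cancel₀ hj, one_smul]
      rw [this]
      exact Submodule.smul_mem _ _ (Submodule.subset_span ⟨j, rfl⟩)
  rw [show Set.range B.col = Set.range Bᵀ from rfl, hspan]
  exact finrank_span_singleton hu

/-- A rank-one matrix factors as an outer product. -/
lemma outer_of_rank_one {p q : ℕ} (A : Matrix (Fin p) (Fin q) ℝ) (hA : A.rank = 1) :
    ∃ (u : Fin p → ℝ) (v : Fin q → ℝ), ∀ i j, A i j = u i * v j := by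
  rw [Matrix.rank_eq_finrank_span_cols, finrank_eq_one_iff'] at hA
  obtain ⟨⟨u, hu_mem⟩, hu0, hspan⟩ := hA
  choose c hc using fun j => hspan ⟨Aᵀ j, Submodule.subset_span ⟨j, rfl⟩⟩
  refine ⟨u, c, fun i j => ?_⟩
  have h2 : c j • u = Aᵀ j := congrArg Subtype.val (hc j)
  have := congrFun h2 i
  simpa [mul_comm] using this.symm

/-- For a reduced p×q interval matrix with nonnegative lower bounds,
μ contains a rank-one matrix iff there exist positive reals c₁ = 1, c₂, …, c_q with
m_{i,t} · c_k ≤ M_{i,k} · c_t for all i, t, k. -/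
theorem rank_one_iff_scaling (p q : ℕ) (hq : 0 < q)
    (m M : Matrix (Fin p) (Fin q) ℝ)
    (hm : ∀ i j, 0 ≤ m i j)
    (hle : ∀ i j, m i j ≤ M i j)
    (hredrow : ∀ i, ∃ j, ¬ (m i j ≤ 0 ∧ 0 ≤ M i j))
    (hredcol : ∀ j, ∃ i, ¬ (m i j ≤ 0 ∧ 0 ≤ M i j)) :
    (∃ A : Matrix (Fin p) (Fin q) ℝ,
        (∀ i j, A i j ∈ Set.Icc (m i j) (M i j)) ∧ A.rank = 1) ↔
      ∃ c : Fin q → ℝ, c ⟨0, hq⟩ = 1 ∧ (∀ j, 0 < c j) ∧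
        ∀ (i : Fin p) (t k : Fin q), m i t * c k ≤ M i k * c t := by
  -- Reducedness rephrased: each row and column of `m` has a positive entry.
  have hrow : ∀ i, ∃ j, 0 < m i j := by
    intro i
    obtain ⟨j, hj⟩ := hredrow i
    exact ⟨j, lt_of_not_ge fun h => hj ⟨h, le_trans (hm i j) (hle i j)⟩⟩
  have hcolpos : ∀ j, ∃ i, 0 < m i j := by
    intro j
    obtain ⟨i, hi⟩ := hredcol j
    exact ⟨i, lt_of_not_ge fun h => hi ⟨h, le_trans (hm i j) (hle i j)⟩⟩
  set j0 : Fin q := ⟨0, hq⟩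
  obtain ⟨i0, _⟩ := hcolpos j0
  constructor
  · rintro ⟨A, hmem, hrank⟩
    obtain ⟨u, v, hfac⟩ := outer_of_rank_one A hrank
    -- all entries of A are positive
    have hApos : ∀ i j, 0 < A i j := by
      have hune : ∀ i, u i ≠ 0 := by
        intro i
        obtain ⟨t, ht⟩ := hrow i
        have : 0 < A i t := lt_of_lt_of_le ht (hmem i t).1
        rw [hfac] at this
        exact fun h => by simp [h] at this
      have hvne : ∀ j, v j ≠ 0 := by
        intro j
        obtain ⟨i, hi⟩ := hcolpos j
        have : 0 < A i j := lt_of_lt_of_le hi (hmem i j).1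
        rw [hfac] at this
        exact fun h => by simp [h] at this
      intro i j
      have h0 : 0 ≤ A i j := le_trans (hm i j) (hmem i j).1
      have hne : A i j ≠ 0 := by
        rw [hfac]; exact mul_ne_zero (hune i) (hvne j)
      exact lt_of_le_of_ne h0 (Ne.symm hne)
    set D := A i0 j0 with hD
    have hDpos : 0 < D := hApos i0 j0
    refine ⟨fun j => A i0 j / D, div_self hDpos.ne', fun j => div_pos (hApos i0 j) hDpos,
      fun i t k => ?_⟩
    have hckpos : (0:ℝ) ≤ A i0 k / D := le_of_lt (div_pos (hApos i0 k) hDpos)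
    have hctpos : (0:ℝ) ≤ A i0 t / D := le_of_lt (div_pos (hApos i0 t) hDpos)
    have key : A i t * A i0 k = A i k * A i0 t := by
      rw [hfac, hfac, hfac, hfac]; ring
    calc m i t * (A i0 k / D) ≤ A i t * (A i0 k / D) :=
          mul_le_mul_of_nonneg_right (hmem i t).1 hckpos
      _ = A i k * (A i0 t / D) := by
          rw [← mul_div_assoc, ← mul_div_assoc, key]
      _ ≤ M i k * (A i0 t / D) := mul_le_mul_of_nonneg_right (hmem i k).2 hctpos
  · rintro ⟨c, hc0, hcpos, hineq⟩
    have hne : (Finset.univ : Finset (Fin q)).Nonempty := ⟨j0, Finset.mem_univ _⟩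
    set r : Fin p → ℝ := fun i => Finset.univ.sup' hne (fun t => m i t / c t) with hr
    have hrpos : ∀ i, 0 < r i := by
      intro i
      obtain ⟨t, ht⟩ := hrow i
      exact lt_of_lt_of_le (div_pos ht (hcpos t))
        (Finset.le_sup' (fun t => m i t / c t) (Finset.mem_univ t))
    refine ⟨Matrix.of fun i j => r i * c j, fun i j => ⟨?_, ?_⟩, ?_⟩
    · have : m i j / c j ≤ r i :=
        Finset.le_sup' (fun t => m i t / c t) (Finset.mem_univ j)
      calc m i j = m i j / c j * c j := (div_mul_cancel₀ _ (hcpos j).ne').symm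
        _ ≤ r i * c j := mul_le_mul_of_nonneg_right this (hcpos j).le
    · have hsup : r i ≤ M i j / c j := by
        apply Finset.sup'_le
        intro t _
        rw [div_le_div_iff₀ (hcpos t) (hcpos j)]
        exact hineq i t j
      calc r i * c j ≤ M i j / c j * c j :=
            mul_le_mul_of_nonneg_right hsup (hcpos j).le
        _ = M i j := div_mul_cancel₀ _ (hcpos j).ne'
    · exact rank_of_outer r c
        (fun h => (hrpos i0).ne' (congrFun h i0))
        (fun h => (hcpos j0).ne' (congrFun h j0))
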